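/- arXiv:2506.08150 — 6 statements merged into one kernel-verified Lean document; each statement's English description precedes it below -/
import Mathlib

section
/- Let Δ_{λ,ν} be the logic program consisting of the fact t_{0,0} together with rules (⋁_{d<d'≤ν} t_{k+1,d'} ← t_{k,d}) for all 0 ≤ k < λ−1 and 0 ≤ d ≤ ν. If ⟨T,T⟩ is an equilibrium model of Δ_{λ,ν}, then ⟨T,T⟩ is timed wrt λ, i.e., there exists a timing function τ:[0,λ)→ℕ with τ(0)=0 and τ strictly increasing, such that for all 0 ≤ k < λ and d ∈ ℕ: t_{k,d} ∈ T iff τ(k)=d. -/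
/-! ### Propositional Here-and-There -/

inductive HTForm (α : Type) : Type
  | bot : HTForm α
  | atom : α → HTForm α
  | and : HTForm α → HTForm α → HTForm α
  | or : HTForm α → HTForm α → HTForm α
  | imp : HTForm α → HTForm α → HTForm α

/-- HT satisfaction `⟨H,T⟩ ⊨ φ`. -/
def HTSat {α : Type} : Set α → Set α → HTForm α → Prop
  | _, _, .bot => False
  | H, _, .atom a => a ∈ H
  | H, T, .and φ ψ => HTSat H T φ ∧ HTSat H T ψ
  | H, T, .or φ ψ => HTSat H T φ ∨ HTSat H T ψ
  | H, T, .imp φ ψ => (HTSat H T φ → HTSat H T ψ) ∧ (HTSat T T φ → HTSat T T ψ)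

/-- Classical satisfaction. -/
def ClSat {α : Type} : Set α → HTForm α → Prop
  | _, .bot => False
  | T, .atom a => a ∈ T
  | T, .and φ ψ => ClSat T φ ∧ ClSat T ψ
  | T, .or φ ψ => ClSat T φ ∨ ClSat T ψ
  | T, .imp φ ψ => ClSat T φ → ClSat T ψ

def HTModel {α : Type} (H T : Set α) (Γ : Set (HTForm α)) : Prop :=
  ∀ φ ∈ Γ, HTSat H T φ

/-- Equilibrium model: total HT-model minimal in the here-component. -/
def EqModel {α : Type} (T : Set α) (Γ : Set (HTForm α)) : Prop :=
  HTModel T T Γ ∧ ∀ H : Set α, H ⊆ T → HTModel H T Γ → H = T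

def hneg {α : Type} (φ : HTForm α) : HTForm α := .imp φ .bot
def hTop {α : Type} : HTForm α := hneg .bot
def hconj {α : Type} (l : List (HTForm α)) : HTForm α := l.foldr .and hTop
def hdisj {α : Type} (l : List (HTForm α)) : HTForm α := l.foldr .or .bot

/-! ### Timing functions -/

/-- A (strict) timing function wrt `lam`: `τ 0 = 0` and `τ` strictly increasing on `[0, lam)`. -/
def TimingFn (lam : ℕ) (τ : ℕ → ℕ) : Prop :=
  τ 0 = 0 ∧ ∀ k, k + 1 < lam → τ k < τ (k + 1)

/-! ### Metric formulas and MHT satisfaction -/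

inductive MForm (α : Type) : Type
  | bot : MForm α
  | atom : α → MForm α
  | and : MForm α → MForm α → MForm α
  | or : MForm α → MForm α → MForm α
  | imp : MForm α → MForm α → MForm α
  | init : MForm α
  | next : ℕ → Option ℕ → MForm α → MForm α
  | always : ℕ → Option ℕ → MForm α → MForm α
  | event : ℕ → Option ℕ → MForm α → MForm α

/-- Membership `d ∈ [m, n)` with `n ∈ ℕ ∪ {ω}` (`none` = ω). -/
def inI (m : ℕ) (n : Option ℕ) (d : ℕ) : Prop :=
  m ≤ d ∧ ∀ n', n = some n' → d < n'

/-- MHT satisfaction over a timed HT-trace of length `lam` given by `H T : ℕ → Set α` and `τ`. -/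
def MSat {α : Type} (lam : ℕ) : (ℕ → Set α) → (ℕ → Set α) → (ℕ → ℕ) → ℕ → MForm α → Prop
  | _, _, _, _, .bot => False
  | H, _, _, k, .atom a => a ∈ H k
  | H, T, τ, k, .and φ ψ => MSat lam H T τ k φ ∧ MSat lam H T τ k ψ
  | H, T, τ, k, .or φ ψ => MSat lam H T τ k φ ∨ MSat lam H T τ k ψ
  | H, T, τ, k, .imp φ ψ =>
      (MSat lam H T τ k φ → MSat lam H T τ k ψ) ∧
      (MSat lam T T τ k φ → MSat lam T T τ k ψ)
  | _, _, _, k, .init => k = 0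
  | H, T, τ, k, .next m n φ =>
      k + 1 < lam ∧ MSat lam H T τ (k + 1) φ ∧ inI m n (τ (k + 1) - τ k)
  | H, T, τ, k, .event m n φ =>
      ∃ i, k ≤ i ∧ i < lam ∧ inI m n (τ i - τ k) ∧ MSat lam H T τ i φ
  | H, T, τ, k, .always m n φ =>
      ∀ i, k ≤ i → i < lam → inI m n (τ i - τ k) → MSat lam H T τ i φ

def mneg {α : Type} (φ : MForm α) : MForm α := .imp φ .bot
def mTop {α : Type} : MForm α := mneg .bot
def mconj {α : Type} (l : List (MForm α)) : MForm α := l.foldr .and mTop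
def mdisj {α : Type} (l : List (MForm α)) : MForm α := l.foldr .or .bot

/-! ### The Boolean timing program Δ_{λ,ν} -/

/-- `bigOr`/`deltaRule`/`DeltaB` over atoms embedded via `f : ℕ × ℕ → β`
(`f (k,d)` plays the role of the atom `t_{k,d}`). -/
def deltaRule {β : Type} (f : ℕ × ℕ → β) (k d ν : ℕ) : HTForm β :=
  .imp (.atom (f (k, d)))
    (hdisj (((List.range (ν + 1)).filter (fun d' => decide (d < d'))).map
      (fun d' => .atom (f (k + 1, d')))))

def DeltaB {β : Type} (f : ℕ × ℕ → β) (lam ν : ℕ) : Set (HTForm β) :=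
  {HTForm.atom (f (0, 0))} ∪
  {r | ∃ k d, k + 1 < lam ∧ d ≤ ν ∧ r = deltaRule f k d ν}

/-- `⟨H,T⟩` is timed wrt `lam` with timing function `τ`:
`t_{k,d} ∈ H ↔ τ k = d` and `t_{k,d} ∈ T ↔ τ k = d` for all `k < lam`. -/
def TimedHT {β : Type} (f : ℕ × ℕ → β) (lam : ℕ) (H T : Set β) (τ : ℕ → ℕ) : Prop :=
  TimingFn lam τ ∧
  ∀ k, k < lam → ∀ d, ((f (k, d) ∈ H) ↔ τ k = d) ∧ ((f (k, d) ∈ T) ↔ τ k = d)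

/-! ### HT_c with difference constraints (simple signature) -/

abbrev CVal (V : Type) := V → Option ℕ

def CValLe {V : Type} (h t : CVal V) : Prop := ∀ x d, h x = some d → t x = some d

inductive CForm (V : Type) : Type
  | bot : CForm V
  | eqC : V → ℕ → CForm V
  | diff : V → V → ℤ → CForm V
  | and : CForm V → CForm V → CForm V
  | or : CForm V → CForm V → CForm V
  | imp : CForm V → CForm V → CForm V

def CSat {V : Type} : CVal V → CVal V → CForm V → Prop
  | _, _, .bot => False
  | h, _, .eqC x d => h x = some d
  | h, _, .diff x y d => ∃ a b : ℕ, h x = some a ∧ h y = some b ∧ (a : ℤ) - b ≤ d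
  | h, t, .and φ ψ => CSat h t φ ∧ CSat h t ψ
  | h, t, .or φ ψ => CSat h t φ ∨ CSat h t ψ
  | h, t, .imp φ ψ => (CSat h t φ → CSat h t ψ) ∧ (CSat t t φ → CSat t t ψ)

def CModel {V : Type} (h t : CVal V) (Γ : Set (CForm V)) : Prop := ∀ φ ∈ Γ, CSat h t φ

/-- Δ^c_λ over integer variables `t_0, …, t_{λ-1}` (variables are indices in ℕ). -/
def DeltaC (lam : ℕ) : Set (CForm ℕ) :=
  {CForm.eqC 0 0} ∪ {r | ∃ k, k + 1 < lam ∧ r = CForm.diff k (k + 1) (-1)}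

/-- `⟨h,t⟩` is timed wrt `lam`. -/
def TimedC (lam : ℕ) (h t : CVal ℕ) : Prop :=
  ∃ τ : ℕ → ℕ, TimingFn lam τ ∧ ∀ k, k < lam → h k = some (τ k) ∧ t k = some (τ k)

/-! ### Timed traces and the bijection θ/σ -/

abbrev TAtom (α : Type) := (α × ℕ) ⊕ (ℕ × ℕ)

/-- A trace candidate: here-states, there-states and a timing function. -/
abbrev TraceC (α : Type) := (ℕ → Set α) × (ℕ → Set α) × (ℕ → ℕ)

/-- Timed HT-trace of length `lam` (normalized beyond `lam`). -/
def IsTTrace {α : Type} (lam : ℕ) (M : TraceC α) : Prop :=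
  (∀ k, M.1 k ⊆ M.2.1 k) ∧ TimingFn lam M.2.2 ∧
  (∀ k, lam ≤ k → M.1 k = ∅ ∧ M.2.1 k = ∅ ∧ M.2.2 k = 0)

def thetaMap {α : Type} (lam : ℕ) (M : TraceC α) : Set (TAtom α) × Set (TAtom α) :=
  ({x | (∃ a k, k < lam ∧ a ∈ M.1 k ∧ x = Sum.inl (a, k)) ∨
        (∃ k, k < lam ∧ x = Sum.inr (k, M.2.2 k))},
   {x | (∃ a k, k < lam ∧ a ∈ M.2.1 k ∧ x = Sum.inl (a, k)) ∨
        (∃ k, k < lam ∧ x = Sum.inr (k, M.2.2 k))})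

/-- HT-interpretations over `A* ∪ T` timed wrt `lam`. -/
def TimedInterp (α : Type) (lam : ℕ) : Set (Set (TAtom α) × Set (TAtom α)) :=
  {p | p.1 ⊆ p.2 ∧ (∀ a k, Sum.inl (a, k) ∈ p.2 → k < lam) ∧
    ∃ τ : ℕ → ℕ, TimingFn lam τ ∧
      ∀ k d, (Sum.inr (k, d) ∈ p.1 ↔ (k < lam ∧ τ k = d)) ∧
             (Sum.inr (k, d) ∈ p.2 ↔ (k < lam ∧ τ k = d))}

def sigmaMap {α : Type} (lam : ℕ) (p : Set (TAtom α) × Set (TAtom α)) (τ : ℕ → ℕ) :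
    TraceC α :=
  (fun k => {a | Sum.inl (a, k) ∈ p.1},
   fun k => {a | Sum.inl (a, k) ∈ p.2},
   fun k => if k < lam then τ k else 0)

/-! ### Metric logic programs and the translation Π_λ -/

inductive BAtom (α : Type) : Type
  | atom : α → BAtom α
  | initB : BAtom α
  | finB : BAtom α

/-- A metric rule: either `□(α ← β)` or `□(○_[m,n) a ← β)`. -/
inductive MRule (α : Type) : Type
  | std : List α → List α → List (BAtom α) → List (BAtom α) → MRule α
  | nxt : ℕ → Option ℕ → α → List (BAtom α) → List (BAtom α) → MRule α

def bToM {α : Type} : BAtom α → MForm α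
  | .atom a => .atom a
  | .initB => .init
  | .finB => mneg (.next 0 none mTop)

/-- The rule body as a metric formula. -/
def MRule.mbody {α : Type} : MRule α → MForm α
  | .std _ _ bp bn =>
      .and (mconj (bp.map bToM)) (mconj (bn.map (fun b => mneg (bToM b))))
  | .nxt _ _ _ bp bn =>
      .and (mconj (bp.map bToM)) (mconj (bn.map (fun b => mneg (bToM b))))

/-- The rule (without the leading `□`) as a metric formula. -/
def MRule.toMForm {α : Type} : MRule α → MForm α
  | .std hp hn bp bn =>
      .imp (MRule.mbody (.std hp hn bp bn))
        (mdisj (hp.map MForm.atom ++ hn.map (fun a => mneg (MForm.atom a))))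
  | .nxt m n a bp bn =>
      .imp (MRule.mbody (.nxt m n a bp bn)) (.next m n (.atom a))

/-- `(H,T,τ)` is an MHT-model (of length `lam`) of program `P`. -/
def MHTModelP {α : Type} (lam : ℕ) (H T : ℕ → Set α) (τ : ℕ → ℕ)
    (P : Set (MRule α)) : Prop :=
  ∀ r ∈ P, ∀ k, k < lam → MSat lam H T τ k r.toMForm

/-- Metric equilibrium model `(⟨T,T⟩, τ)` of `P`. -/
def MetricEq {α : Type} (lam : ℕ) (T : ℕ → Set α) (τ : ℕ → ℕ)
    (P : Set (MRule α)) : Prop :=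
  MHTModelP lam T T τ P ∧
  ∀ H : ℕ → Set α, (∀ k, H k ⊆ T k) → MHTModelP lam H T τ P → ∀ k, k < lam → H k = T k

/-- Translation of body atoms at step `k`, with atoms embedded via `g : α × ℕ → β`. -/
def trB {α β : Type} (g : α × ℕ → β) (lam k : ℕ) : BAtom α → HTForm β
  | .atom a => .atom (g (a, k))
  | .initB => if k = 0 then hTop else .bot
  | .finB => if k = lam - 1 then hTop else .bot

def trBody {α β : Type} (g : α × ℕ → β) (lam k : ℕ) : MRule α → HTForm β
  | .std _ _ bp bn =>
      .and (hconj (bp.map (trB g lam k)))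
           (hconj (bn.map (fun b => hneg (trB g lam k b))))
  | .nxt _ _ _ bp bn =>
      .and (hconj (bp.map (trB g lam k)))
           (hconj (bn.map (fun b => hneg (trB g lam k b))))

/-- Translation `t_k(r)` of a metric rule at step `k`. -/
def trRule {α β : Type} (g : α × ℕ → β) (lam k : ℕ) : MRule α → HTForm β
  | .std hp hn bp bn =>
      .imp (trBody g lam k (.std hp hn bp bn))
        (hdisj (hp.map (fun a => HTForm.atom (g (a, k))) ++
                hn.map (fun a => hneg (HTForm.atom (g (a, k))))))
  | .nxt m n a bp bn =>
      .imp (trBody g lam k (.nxt m n a bp bn))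
        (if k = lam - 1 then .bot else .atom (g (a, k + 1)))

/-- `Π_λ(P)`. -/
def PiT {α β : Type} (g : α × ℕ → β) (lam : ℕ) (P : Set (MRule α)) : Set (HTForm β) :=
  {φ | ∃ r ∈ P, ∃ k, k < lam ∧ φ = trRule g lam k r}

/-! ### The Boolean constraint part Ψ_{λ,ν}(P) -/

def PsiB {α : Type} (lam ν : ℕ) (P : Set (MRule α)) : Set (HTForm (TAtom α)) :=
  {φ | ∃ m n a bp bn, MRule.nxt m n a bp bn ∈ P ∧
    ∃ k d d', k + 1 < lam ∧ d < d' ∧ d' ≤ ν ∧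
      φ = .imp (.and (trBody Sum.inl lam k (.nxt m n a bp bn))
                 (.and (.atom (Sum.inr (k, d))) (.atom (Sum.inr (k + 1, d'))))) .bot ∧
      (d' - d < m ∨ ∃ n', n = some n' ∧ n' ≤ d' - d)}

/-- θ on total timed traces, producing one set over `A* ∪ T`. -/
def thetaTot {α : Type} (lam : ℕ) (T : ℕ → Set α) (τ : ℕ → ℕ) : Set (TAtom α) :=
  {x | (∃ a k, k < lam ∧ a ∈ T k ∧ x = Sum.inl (a, k)) ∨
       (∃ k, k < lam ∧ x = Sum.inr (k, τ k))}

/-! ### HT_c over the mixed signature (Boolean atoms + integer timing variables) -/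

inductive CForm2 (α : Type) : Type
  | bot : CForm2 α
  | batom : α × ℕ → CForm2 α
  | eqC : ℕ → ℕ → CForm2 α
  | diff : ℕ → ℕ → ℤ → CForm2 α
  | and : CForm2 α → CForm2 α → CForm2 α
  | or : CForm2 α → CForm2 α → CForm2 α
  | imp : CForm2 α → CForm2 α → CForm2 α

/-- A valuation: Boolean part (atoms assigned `true`) and integer part. -/
abbrev CVal2 (α : Type) := Set (α × ℕ) × (ℕ → Option ℕ)

def CVal2Le {α : Type} (h t : CVal2 α) : Prop :=
  h.1 ⊆ t.1 ∧ ∀ x d, h.2 x = some d → t.2 x = some d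

def CSat2 {α : Type} : CVal2 α → CVal2 α → CForm2 α → Prop
  | _, _, .bot => False
  | h, _, .batom p => p ∈ h.1
  | h, _, .eqC x d => h.2 x = some d
  | h, _, .diff x y d => ∃ a b : ℕ, h.2 x = some a ∧ h.2 y = some b ∧ (a : ℤ) - b ≤ d
  | h, t, .and φ ψ => CSat2 h t φ ∧ CSat2 h t ψ
  | h, t, .or φ ψ => CSat2 h t φ ∨ CSat2 h t ψ
  | h, t, .imp φ ψ => (CSat2 h t φ → CSat2 h t ψ) ∧ (CSat2 t t φ → CSat2 t t ψ)

def CModel2 {α : Type} (h t : CVal2 α) (Γ : Set (CForm2 α)) : Prop :=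
  ∀ φ ∈ Γ, CSat2 h t φ

/-- Constraint equilibrium model. -/
def CEqModel {α : Type} (t : CVal2 α) (Γ : Set (CForm2 α)) : Prop :=
  CModel2 t t Γ ∧ ∀ h : CVal2 α, CVal2Le h t → CModel2 h t Γ → h = t

def cneg {α : Type} (φ : CForm2 α) : CForm2 α := .imp φ .bot

/-- Conversion of Boolean HT formulas over `α × ℕ` into mixed constraint formulas. -/
def toC2 {α : Type} : HTForm (α × ℕ) → CForm2 α
  | .bot => .bot
  | .atom p => .batom p
  | .and φ ψ => .and (toC2 φ) (toC2 ψ)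
  | .or φ ψ => .or (toC2 φ) (toC2 ψ)
  | .imp φ ψ => .imp (toC2 φ) (toC2 ψ)

def PiC {α : Type} (lam : ℕ) (P : Set (MRule α)) : Set (CForm2 α) :=
  toC2 '' PiT id lam P

def DeltaC2 {α : Type} (lam : ℕ) : Set (CForm2 α) :=
  {CForm2.eqC 0 0} ∪ {r | ∃ k, k + 1 < lam ∧ r = CForm2.diff k (k + 1) (-1)}

def PsiC {α : Type} (lam : ℕ) (P : Set (MRule α)) : Set (CForm2 α) :=
  {φ | ∃ m n a bp bn, MRule.nxt m n a bp bn ∈ P ∧ ∃ k, k + 1 < lam ∧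
    (φ = .imp (.and (toC2 (trBody id lam k (.nxt m n a bp bn)))
               (cneg (.diff k (k + 1) (-(m : ℤ))))) .bot ∨
     ∃ n', n = some n' ∧
       φ = .imp (.and (toC2 (trBody id lam k (.nxt m n a bp bn)))
                 (cneg (.diff (k + 1) k ((n' : ℤ) - 1)))) .bot)}

/-- θ^c on total timed traces. -/
def thetaC {α : Type} (lam : ℕ) (T : ℕ → Set α) (τ : ℕ → ℕ) : CVal2 α :=
  ({p | p.2 < lam ∧ p.1 ∈ T p.2}, fun k => if k < lam then some (τ k) else none)
lemma htSat_hdisj {α : Type} (H T : Set α) (l : List (HTForm α)) :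
    HTSat H T (hdisj l) ↔ ∃ φ ∈ l, HTSat H T φ := by
  induction l with
  | nil => simp [hdisj, HTSat]
  | cons a l ih =>
      simp only [hdisj, List.foldr_cons] at *
      show HTSat H T a ∨ _ ↔ _
      simp [ih]

open Classical in
/-- Chain construction. -/
noncomputable def chainFn (ν : ℕ) (T : Set (ℕ × ℕ)) : ℕ → ℕ
  | 0 => 0
  | k + 1 =>
    if h : ∃ d', chainFn ν T k < d' ∧ d' ≤ ν ∧ (k + 1, d') ∈ T then h.choose
    else chainFn ν T k + 1

open Classical in
lemma chainFn_succ (ν : ℕ) (T : Set (ℕ × ℕ)) (k : ℕ) :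
    chainFn ν T (k + 1) =
      if h : ∃ d', chainFn ν T k < d' ∧ d' ≤ ν ∧ (k + 1, d') ∈ T then h.choose
      else chainFn ν T k + 1 := rfl

lemma chainFn_lt (ν : ℕ) (T : Set (ℕ × ℕ)) (k : ℕ) :
    chainFn ν T k < chainFn ν T (k + 1) := by
  rw [chainFn_succ]
  split
  · next h => exact h.choose_spec.1
  · omega

/-- Prop. 1: equilibrium models of `Δ_{λ,ν}` are timed wrt `λ`. -/
theorem delta_equilibrium_timed (lam ν : ℕ) (T : Set (ℕ × ℕ))
    (h : EqModel T (DeltaB id lam ν)) :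
    ∃ τ : ℕ → ℕ, TimedHT id lam T T τ := by
  obtain ⟨hmod, hmin⟩ := h
  rcases Nat.eq_zero_or_pos lam with hl0 | hlpos
  · exact ⟨fun k => k, ⟨⟨rfl, by omega⟩, by omega⟩⟩
  set τ := chainFn ν T with hτ
  -- the fact is satisfied
  have hfact : (0, 0) ∈ T := hmod (.atom (id (0, 0))) (Or.inl rfl)
  -- invariant: the chain lies in T and stays ≤ ν
  have hinv : ∀ k, k < lam → (k, τ k) ∈ T ∧ τ k ≤ ν := by
    intro k
    induction k with
    | zero => intro _; exact ⟨hfact, Nat.zero_le ν⟩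
    | succ k ih =>
        intro hk
        have ⟨hkT, hkν⟩ := ih (by omega)
        have hrule := hmod (deltaRule id k (τ k) ν)
          (Or.inr ⟨k, τ k, hk, hkν, rfl⟩)
        have := hrule.1 hkT
        rw [htSat_hdisj] at this
        obtain ⟨φ, hφmem, hφsat⟩ := this
        simp only [List.mem_map, List.mem_filter, List.mem_range] at hφmem
        obtain ⟨d', ⟨hd'r, hd'lt⟩, rfl⟩ := hφmem
        have hex : ∃ d', τ k < d' ∧ d' ≤ ν ∧ (k + 1, d') ∈ T :=
          ⟨d', by simpa using hd'lt, by omega, hφsat⟩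
        have : τ (k + 1) = hex.choose := by
          rw [show τ (k+1) = _ from chainFn_succ ν T k, dif_pos hex]
        rw [this]
        exact ⟨hex.choose_spec.2.2, hex.choose_spec.2.1⟩
  -- the chain set H
  set H : Set (ℕ × ℕ) := {x | ∃ k, k < lam ∧ x = (k, τ k)} with hH
  have hHT : H ⊆ T := by
    rintro x ⟨k, hk, rfl⟩; exact (hinv k hk).1
  have hHmod : HTModel H T (DeltaB id lam ν) := by
    rintro φ (hφ | ⟨k, d, hk, hd, rfl⟩)
    · simp only [Set.mem_singleton_iff] at hφ
      subst hφ
      exact ⟨0, hlpos, rfl⟩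
    · constructor
      · rintro ⟨k', hk', heq⟩
        simp only [id_eq, Prod.mk.injEq] at heq
        obtain ⟨rfl, hd'⟩ := heq
        rw [htSat_hdisj]
        refine ⟨.atom (id (k + 1, τ (k + 1))), ?_, ⟨k + 1, hk, rfl⟩⟩
        simp only [List.mem_map, List.mem_filter, List.mem_range]
        refine ⟨τ (k + 1), ⟨?_, ?_⟩, rfl⟩
        · have := (hinv (k + 1) hk).2; omega
        · simp only [decide_eq_true_eq]
          rw [hd']
          exact chainFn_lt ν T k
      · exact (hmod (deltaRule id k d ν) (Or.inr ⟨k, d, hk, hd, rfl⟩)).2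
  have hHeq : H = T := hmin H hHT hHmod
  refine ⟨τ, ⟨rfl, fun k _ => chainFn_lt ν T k⟩, ?_⟩
  intro k hk d
  have hiff : (k, d) ∈ T ↔ τ k = d := by
    rw [← hHeq]
    constructor
    · rintro ⟨k', hk', heq⟩
      simp only [Prod.mk.injEq] at heq
      obtain ⟨rfl, hd'⟩ := heq
      exact hd'.symm
    · rintro rfl; exact ⟨k, hk, rfl⟩
  exact ⟨hiff, hiff⟩
end

section
/- Let ⟨H,T⟩ be an HT-interpretation over atoms {t_{k,d}} that is timed wrt λ with induced timing function τ. Then ⟨H,T⟩ is an HT-model of Δ_{λ,ν} for ν = τ(λ−1). -/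
lemma hdisj_sat {α : Type} {H T : Set α} {l : List (HTForm α)} {φ : HTForm α}
    (hφ : φ ∈ l) (hs : HTSat H T φ) : HTSat H T (hdisj l) := by
  induction l with
  | nil => cases hφ
  | cons a l ih =>
    rcases List.mem_cons.mp hφ with rfl | h
    · exact Or.inl hs
    · exact Or.inr (ih h)

lemma tau_mono {lam : ℕ} {τ : ℕ → ℕ} (ht : TimingFn lam τ) :
    ∀ i j, j < lam → i ≤ j → τ i ≤ τ j := by
  intro i j hj hij
  induction j with
  | zero => simpa [Nat.le_zero.mp hij]
  | succ j ih =>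
    rcases Nat.lt_or_ge i (j + 1) with h | h
    · exact le_trans (ih (lt_trans (Nat.lt_succ_self j) hj) (Nat.lt_succ_iff.mp h))
        (le_of_lt (ht.2 j hj))
    · have : i = j + 1 := le_antisymm hij h
      simp [this]

/-- Prop. 2: a timed HT-interpretation is an HT-model of `Δ_{λ,ν}` for `ν = τ(λ-1)`. -/
theorem timed_model_delta (lam : ℕ) (hlam : 1 ≤ lam) (H T : Set (ℕ × ℕ)) (hHT : H ⊆ T)
    (τ : ℕ → ℕ) (h : TimedHT id lam H T τ) :
    HTModel H T (DeltaB id lam (τ (lam - 1))) := by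
  obtain ⟨htf, hatoms⟩ := h
  set ν := τ (lam - 1) with hν
  intro φ hφ
  rcases hφ with hφ | ⟨k, d, hk, hd, rfl⟩
  · -- the fact `t_{0,0}`
    simp only [Set.mem_singleton_iff] at hφ
    subst hφ
    show (0, 0) ∈ H
    exact ((hatoms 0 (by omega) 0).1).mpr htf.1
  · -- a rule
    have hk1 : k + 1 < lam := hk
    have hk0 : k < lam := by omega
    have hlt : τ k < τ (k + 1) := htf.2 k hk1
    have hle : τ (k + 1) ≤ ν := by
      have := tau_mono htf (k + 1) (lam - 1) (by omega) (by omega)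
      simpa [hν] using this
    have key : ∀ (S T' : Set (ℕ × ℕ)),
        (∀ d', ((k, d') ∈ S ↔ τ k = d')) →
        (∀ d', ((k + 1, d') ∈ S ↔ τ (k + 1) = d')) →
        (k, d) ∈ S →
        HTSat S T' (hdisj (((List.range (ν + 1)).filter (fun d' => decide (d < d'))).map
          (fun d' => HTForm.atom (id (k + 1, d'))))) := by
      intro S T' hS hS1 hmem
      have hτk : τ k = d := (hS d).mp hmem
      have hmem' : HTForm.atom (id (k + 1, τ (k + 1))) ∈
          (((List.range (ν + 1)).filter (fun d' => decide (d < d'))).map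
            (fun d' => HTForm.atom (id (k + 1, d')))) := by
        apply List.mem_map_of_mem
        rw [List.mem_filter]
        refine ⟨List.mem_range.mpr (by omega), by simp; omega⟩
      exact hdisj_sat hmem' ((hS1 (τ (k + 1))).mpr rfl)
    constructor
    · intro hmem
      exact key H T (fun d' => (hatoms k hk0 d').1) (fun d' => (hatoms (k+1) hk1 d').1) hmem
    · intro hmem
      exact key T T (fun d' => (hatoms k hk0 d').2) (fun d' => (hatoms (k+1) hk1 d').2) hmem
end

section
/- Every HT_c-model ⟨h,t⟩ of Δ^c_λ is timed wrt λ: there exists a timing function τ wrt λ with h(t_k) = τ(k) and t(t_k) = τ(k) for all 0 ≤ k < λ. -/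
/-- Prop. 4: every HT_c-model of `Δ^c_λ` is timed wrt `λ`. -/
theorem deltac_model_timed (lam : ℕ) (h t : CVal ℕ) (hle : CValLe h t)
    (hm : CModel h t (DeltaC lam)) :
    ∃ τ : ℕ → ℕ, TimingFn lam τ ∧ ∀ k, k < lam → h k = some (τ k) ∧ t k = some (τ k) := by
  have h0 : h 0 = some 0 := hm (CForm.eqC 0 0) (Or.inl rfl)
  have hdiff : ∀ k, k + 1 < lam →
      ∃ a b : ℕ, h k = some a ∧ h (k + 1) = some b ∧ (a : ℤ) - b ≤ -1 := by
    intro k hk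
    exact hm (CForm.diff k (k + 1) (-1)) (Or.inr ⟨k, hk, rfl⟩)
  refine ⟨fun k => (h k).getD 0, ⟨by simp [h0], ?_⟩, ?_⟩
  · intro k hk
    obtain ⟨a, b, ha, hb, hab⟩ := hdiff k hk
    simp [ha, hb]; omega
  · intro k hk
    have hdef : h k = some ((h k).getD 0) := by
      rcases Nat.eq_zero_or_pos k with rfl | hpos
      · simp [h0]
      · obtain ⟨a, b, ha, hb, _⟩ := hdiff (k - 1) (by omega)
        have : k - 1 + 1 = k := by omega
        rw [this] at hb
        simp [hb]
    exact ⟨hdef, hle k _ hdef⟩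
end

section
/- Conversely, every HT_c-interpretation ⟨h,t⟩ that is timed wrt λ is an HT_c-model of Δ^c_λ. Hence the HT_c-models of Δ^c_λ restricted to the variables t_0,…,t_{λ−1} are exactly the timed interpretations. -/
/-- Prop. 5: every timed HT_c-interpretation is a model of `Δ^c_λ`; hence, for
interpretations `⟨h,t⟩` (with `h ⊆ t`), being a model of `Δ^c_λ` is exactly being timed. -/
theorem timed_model_deltac (lam : ℕ) (hlam : 1 ≤ lam) :
    (∀ h t : CVal ℕ, TimedC lam h t → CModel h t (DeltaC lam)) ∧
    (∀ h t : CVal ℕ, CValLe h t → (CModel h t (DeltaC lam) ↔ TimedC lam h t)) := by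
  have fwd : ∀ h t : CVal ℕ, TimedC lam h t → CModel h t (DeltaC lam) := by
    rintro h t ⟨τ, ⟨hτ0, hτinc⟩, hval⟩ φ hφ
    rcases hφ with hφ | ⟨k, hk, rfl⟩
    · simp only [Set.mem_singleton_iff] at hφ
      subst hφ
      have := (hval 0 hlam).1
      simpa [CSat, hτ0] using this
    · refine ⟨τ k, τ (k + 1), (hval k (by omega)).1, (hval (k+1) hk).1, ?_⟩
      have := hτinc k hk
      omega
  refine ⟨fwd, fun h t hle => ⟨fun hm => ?_, fwd h t⟩⟩
  have h0 : h 0 = some 0 := hm _ (Or.inl rfl)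
  have hdiff : ∀ k, k + 1 < lam → ∃ a b : ℕ, h k = some a ∧ h (k+1) = some b ∧ a < b := by
    intro k hk
    obtain ⟨a, b, ha, hb, hab⟩ := hm _ (Or.inr ⟨k, hk, rfl⟩)
    exact ⟨a, b, ha, hb, by omega⟩
  refine ⟨fun k => (h k).getD 0, ⟨by simp [h0], fun k hk => ?_⟩, fun k hk => ?_⟩
  · obtain ⟨a, b, ha, hb, hab⟩ := hdiff k hk
    simp [ha, hb, hab]
  · have hk' : ∃ a, h k = some a := by
      rcases Nat.lt_or_ge (k + 1) lam with h1 | h1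
      · obtain ⟨a, b, ha, hb, _⟩ := hdiff k h1
        exact ⟨a, ha⟩
      · rcases Nat.eq_zero_or_pos k with rfl | hkpos
        · exact ⟨0, h0⟩
        · obtain ⟨a, b, ha, hb, _⟩ := hdiff (k - 1) (by omega)
          have : k - 1 + 1 = k := by omega
          rw [this] at hb
          exact ⟨b, hb⟩
    obtain ⟨a, ha⟩ := hk'
    exact ⟨by simp [ha], by simp [ha, hle k a ha]⟩
end

section
/- Let P be a metric logic program in which every interval occurring in a head operator ○_I is [0,ω). Then for any fixed timing function τ wrt λ, the map M ↦ θ(M) restricted to the A*-part gives a one-to-one correspondence between MHT-models of P of length λ with timing function τ and HT-models over A* of the translated program Π_λ(P). -/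
section PiAux

variable {α : Type}

def thH (lam : ℕ) (H : ℕ → Set α) : Set (α × ℕ) := {p | p.2 < lam ∧ p.1 ∈ H p.2}

lemma hTop_sat {β : Type} (A B : Set β) : HTSat A B hTop := by
  simp [hTop, hneg, HTSat]

lemma mTop_sat (lam : ℕ) (H T : ℕ → Set α) (τ : ℕ → ℕ) (k : ℕ) :
    MSat lam H T τ k mTop := by
  simp [mTop, mneg, MSat]

lemma forall2_map {X β' γ : Type} {R : β' → γ → Prop} (f : X → β') (g : X → γ) :
    ∀ l : List X, (∀ x ∈ l, R (f x) (g x)) → List.Forall₂ R (l.map f) (l.map g)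
  | [], _ => List.Forall₂.nil
  | x :: l, h =>
      List.Forall₂.cons (h x (by simp))
        (forall2_map f g l (fun y hy => h y (by simp [hy])))

lemma conj_equiv {β : Type} {lam : ℕ} {H T : ℕ → Set α} {τ : ℕ → ℕ} {k : ℕ}
    {A B : Set β} {l : List (MForm α)} {l' : List (HTForm β)}
    (h : List.Forall₂ (fun φ ψ => MSat lam H T τ k φ ↔ HTSat A B ψ) l l') :
    MSat lam H T τ k (mconj l) ↔ HTSat A B (hconj l') := by
  induction h with
  | nil => simp [mconj, hconj, mTop_sat, hTop_sat]
  | cons h _ ih => exact and_congr h ih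

lemma disj_equiv {β : Type} {lam : ℕ} {H T : ℕ → Set α} {τ : ℕ → ℕ} {k : ℕ}
    {A B : Set β} {l : List (MForm α)} {l' : List (HTForm β)}
    (h : List.Forall₂ (fun φ ψ => MSat lam H T τ k φ ↔ HTSat A B ψ) l l') :
    MSat lam H T τ k (mdisj l) ↔ HTSat A B (hdisj l') := by
  induction h with
  | nil => exact Iff.rfl
  | cons h _ ih => exact or_congr h ih

lemma lit_equiv {lam : ℕ} (H T : ℕ → Set α) (τ : ℕ → ℕ) (k : ℕ) (hk : k < lam)
    (b : BAtom α) :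
    MSat lam H T τ k (bToM b) ↔ HTSat (thH lam H) (thH lam T) (trB id lam k b) := by
  cases b with
  | atom a => simp [bToM, trB, MSat, HTSat, thH, hk]
  | initB =>
      by_cases h : k = 0 <;>
        simp [bToM, trB, MSat, HTSat, h, hTop_sat]
  | finB =>
      by_cases h : k = lam - 1
      · have h2 : ¬ (k + 1 < lam) := by omega
        have hl : MSat lam H T τ k (bToM (.finB : BAtom α)) :=
          ⟨fun h3 => absurd h3.1 h2, fun h3 => absurd h3.1 h2⟩
        have hr2 : HTSat (thH lam H) (thH lam T) (trB id lam k (.finB : BAtom α)) := by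
          simp only [trB]
          rw [if_pos h]
          exact hTop_sat _ _
        exact iff_of_true hl hr2
      · have h2 : k + 1 < lam := by omega
        simp only [bToM, trB]
        rw [if_neg h]
        simp [mneg, mTop, MSat, HTSat, h2, inI]

lemma nlit_equiv {lam : ℕ} (H T : ℕ → Set α) (τ : ℕ → ℕ) (k : ℕ) (hk : k < lam)
    (b : BAtom α) :
    MSat lam H T τ k (mneg (bToM b)) ↔
      HTSat (thH lam H) (thH lam T) (hneg (trB id lam k b)) := by
  simp only [mneg, hneg, MSat, HTSat]
  rw [lit_equiv H T τ k hk b, lit_equiv T T τ k hk b]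

lemma body_equiv {lam : ℕ} (H T : ℕ → Set α) (τ : ℕ → ℕ) (k : ℕ) (hk : k < lam)
    (r : MRule α) :
    MSat lam H T τ k r.mbody ↔ HTSat (thH lam H) (thH lam T) (trBody id lam k r) := by
  cases r with
  | std hp hn bp bn =>
      exact and_congr
        (conj_equiv (forall2_map _ _ bp (fun b _ => lit_equiv H T τ k hk b)))
        (conj_equiv (forall2_map _ _ bn (fun b _ => nlit_equiv H T τ k hk b)))
  | nxt m n a bp bn =>
      exact and_congr
        (conj_equiv (forall2_map _ _ bp (fun b _ => lit_equiv H T τ k hk b)))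
        (conj_equiv (forall2_map _ _ bn (fun b _ => nlit_equiv H T τ k hk b)))

lemma head_std_equiv {lam : ℕ} (H T : ℕ → Set α) (τ : ℕ → ℕ) (k : ℕ) (hk : k < lam)
    (hp hn : List α) :
    MSat lam H T τ k
      (mdisj (hp.map MForm.atom ++ hn.map (fun a => mneg (MForm.atom a)))) ↔
    HTSat (thH lam H) (thH lam T)
      (hdisj (hp.map (fun a => HTForm.atom (id (a, k))) ++
              hn.map (fun a => hneg (HTForm.atom (id (a, k)))))) := by
  refine disj_equiv (List.rel_append ?_ ?_)
  · exact forall2_map _ _ hp (fun a _ => lit_equiv H T τ k hk (.atom a))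
  · exact forall2_map _ _ hn (fun a _ => nlit_equiv H T τ k hk (.atom a))

lemma rule_equiv {lam : ℕ} (H T : ℕ → Set α) (τ : ℕ → ℕ) (k : ℕ) (hk : k < lam)
    (r : MRule α) (hr : ∀ m n a bp bn, r = .nxt m n a bp bn → m = 0 ∧ n = none) :
    MSat lam H T τ k r.toMForm ↔ HTSat (thH lam H) (thH lam T) (trRule id lam k r) := by
  cases r with
  | std hp hn bp bn =>
      exact and_congr
        (imp_congr (body_equiv H T τ k hk (.std hp hn bp bn))
          (head_std_equiv H T τ k hk hp hn))
        (imp_congr (body_equiv T T τ k hk (.std hp hn bp bn))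
          (head_std_equiv T T τ k hk hp hn))
  | nxt m n a bp bn =>
      obtain ⟨rfl, rfl⟩ := hr m n a bp bn rfl
      have hhead : ∀ G : ℕ → Set α,
          (MSat lam G T τ k (.next 0 none (.atom a)) ↔
            HTSat (thH lam G) (thH lam T)
              (if k = lam - 1 then HTForm.bot else .atom (id (a, k + 1)))) := by
        intro G
        by_cases h : k = lam - 1
        · have h2 : ¬ (k + 1 < lam) := by omega
          rw [if_pos h]
          exact iff_of_false (fun h3 => absurd h3.1 h2) (fun h3 => h3.elim)
        · have h2 : k + 1 < lam := by omega
          rw [if_neg h]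
          simp [MSat, HTSat, h2, inI, thH]
      exact and_congr
        (imp_congr (body_equiv H T τ k hk (.nxt 0 none a bp bn)) (hhead H))
        (imp_congr (body_equiv T T τ k hk (.nxt 0 none a bp bn)) (hhead T))

end PiAux
/-- For metric programs whose head intervals are all `[0,ω)` and a fixed timing
function `τ`, θ (restricted to the `A*`-part) is a one-to-one correspondence between
MHT-models of `P` of length `λ` with timing `τ` and HT-models of `Π_λ(P)`. -/
theorem pi_correspondence {α : Type} (lam : ℕ) (P : Set (MRule α))
    (hP : ∀ m n a bp bn, MRule.nxt m n a bp bn ∈ P → m = 0 ∧ n = none)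
    (τ : ℕ → ℕ) (hτ : TimingFn lam τ) :
    Set.BijOn
      (fun HT : (ℕ → Set α) × (ℕ → Set α) =>
        (({p : α × ℕ | p.2 < lam ∧ p.1 ∈ HT.1 p.2},
          {p : α × ℕ | p.2 < lam ∧ p.1 ∈ HT.2 p.2}) : Set (α × ℕ) × Set (α × ℕ)))
      {HT | (∀ k, HT.1 k ⊆ HT.2 k) ∧ (∀ k, lam ≤ k → HT.1 k = ∅ ∧ HT.2 k = ∅) ∧
            MHTModelP lam HT.1 HT.2 τ P}
      {p | p.1 ⊆ p.2 ∧ (∀ x ∈ p.2, x.2 < lam) ∧ HTModel p.1 p.2 (PiT id lam P)} := by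
  constructor
  · -- MapsTo
    rintro ⟨H, T⟩ ⟨hsub, hnorm, hmod⟩
    refine ⟨fun p hp => ⟨hp.1, hsub p.2 hp.2⟩, fun x hx => hx.1, ?_⟩
    rintro φ ⟨r, hr, k, hk, rfl⟩
    refine (rule_equiv H T τ k hk r ?_).mp (hmod r hr k hk)
    rintro m n a bp bn rfl
    exact hP m n a bp bn hr
  constructor
  · -- InjOn
    rintro ⟨H, T⟩ hx ⟨H', T'⟩ hy heq
    simp only [Prod.mk.injEq] at heq
    have h1 : H = H' := by
      funext k
      by_cases hk : k < lam
      · ext a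
        have := Set.ext_iff.mp heq.1 (a, k)
        simpa [hk] using this
      · rw [show H k = ∅ from (hx.2.1 k (le_of_not_gt hk)).1, show H' k = ∅ from (hy.2.1 k (le_of_not_gt hk)).1]
    have h2 : T = T' := by
      funext k
      by_cases hk : k < lam
      · ext a
        have := Set.ext_iff.mp heq.2 (a, k)
        simpa [hk] using this
      · rw [show T k = ∅ from (hx.2.1 k (le_of_not_gt hk)).2, show T' k = ∅ from (hy.2.1 k (le_of_not_gt hk)).2]
    simp [h1, h2]
  · -- SurjOn
    rintro ⟨p1, p2⟩ ⟨hsub, hlt, hmod⟩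
    set H : ℕ → Set α := fun k => if k < lam then {a | (a, k) ∈ p1} else ∅ with hH
    set T : ℕ → Set α := fun k => if k < lam then {a | (a, k) ∈ p2} else ∅ with hT
    have e1 : {p : α × ℕ | p.2 < lam ∧ p.1 ∈ H p.2} = p1 := by
      ext ⟨a, k⟩
      constructor
      · rintro ⟨hk, ha⟩
        simpa [hH, hk] using ha
      · intro h
        have hk : k < lam := hlt _ (hsub h)
        exact ⟨hk, by simpa [hH, hk] using h⟩
    have e2 : {p : α × ℕ | p.2 < lam ∧ p.1 ∈ T p.2} = p2 := by
      ext ⟨a, k⟩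
      constructor
      · rintro ⟨hk, ha⟩
        simpa [hT, hk] using ha
      · intro h
        have hk : k < lam := hlt _ h
        exact ⟨hk, by simpa [hT, hk] using h⟩
    refine ⟨(H, T), ⟨?_, ?_, ?_⟩, ?_⟩
    · intro k a ha
      by_cases hk : k < lam
      · simp only [hH, hT, if_pos hk] at *
        exact hsub ha
      · simp [hH, if_neg hk] at ha
    · intro k hk
      constructor <;> simp [hH, hT, Nat.not_lt.mpr hk]
    · intro r hr k hk
      have hside : ∀ m n a bp bn, r = .nxt m n a bp bn → m = 0 ∧ n = none := by
        rintro m n a bp bn rfl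
        exact hP m n a bp bn hr
      refine (rule_equiv H T τ k hk r hside).mpr ?_
      have : thH lam H = p1 := e1
      have h2' : thH lam T = p2 := e2
      rw [this, h2']
      exact hmod _ ⟨r, hr, k, hk, rfl⟩
    · simp only [Prod.mk.injEq]
      exact ⟨e1, e2⟩
end

section
/- Correctness of the Boolean translation: if ⟨T,T⟩ is an equilibrium model of Π_λ(P) ∪ Δ_{λ,ν} ∪ Ψ_{λ,ν}(P) for a metric logic program P and λ, ν ∈ ℕ, then σ(⟨T,T⟩) is a metric equilibrium model of P. -/
section MyHelpers
variable {α : Type} {β : Type}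

lemma my_htpersist {H T : Set β} (hsub : H ⊆ T) : ∀ φ : HTForm β, HTSat H T φ → HTSat T T φ := by
  intro φ
  induction φ with
  | bot => exact id
  | atom a => exact fun h => hsub h
  | and φ ψ ih1 ih2 => exact fun h => ⟨ih1 h.1, ih2 h.2⟩
  | or φ ψ ih1 ih2 => exact fun h => h.elim (fun h => Or.inl (ih1 h)) (fun h => Or.inr (ih2 h))
  | imp φ ψ ih1 ih2 => exact fun h => ⟨h.2, h.2⟩

lemma my_hTop_sat {H T : Set β} : HTSat H T hTop := ⟨fun h => h, fun h => h⟩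

lemma my_hconj_iff {H T : Set β} (l : List (HTForm β)) :
    HTSat H T (hconj l) ↔ ∀ φ ∈ l, HTSat H T φ := by
  induction l with
  | nil => simpa [hconj] using my_hTop_sat
  | cons a l ih =>
    show HTSat H T (.and a (hconj l)) ↔ _
    simp only [HTSat, ih, List.mem_cons]
    constructor
    · rintro ⟨h1, h2⟩ φ (rfl | h)
      · exact h1
      · exact h2 _ h
    · intro h
      exact ⟨h _ (Or.inl rfl), fun φ hφ => h _ (Or.inr hφ)⟩

lemma my_hdisj_iff {H T : Set β} (l : List (HTForm β)) :
    HTSat H T (hdisj l) ↔ ∃ φ ∈ l, HTSat H T φ := by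
  induction l with
  | nil => simp [hdisj, HTSat]
  | cons a l ih =>
    show HTSat H T (.or a (hdisj l)) ↔ _
    simp only [HTSat, ih, List.mem_cons]
    constructor
    · rintro (h | ⟨φ, hφ, h⟩)
      · exact ⟨a, Or.inl rfl, h⟩
      · exact ⟨φ, Or.inr hφ, h⟩
    · rintro ⟨φ, (rfl | hφ), h⟩
      · exact Or.inl h
      · exact Or.inr ⟨φ, hφ, h⟩

lemma my_mconj_iff {lam : ℕ} {H T : ℕ → Set α} {τ : ℕ → ℕ} {k : ℕ} (l : List (MForm α)) :
    MSat lam H T τ k (mconj l) ↔ ∀ φ ∈ l, MSat lam H T τ k φ := by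
  induction l with
  | nil => simp [mconj, mTop, mneg, MSat]
  | cons a l ih =>
    show MSat lam H T τ k (.and a (mconj l)) ↔ _
    simp only [MSat, ih, List.mem_cons]
    constructor
    · rintro ⟨h1, h2⟩ φ (rfl | h)
      · exact h1
      · exact h2 _ h
    · intro h
      exact ⟨h _ (Or.inl rfl), fun φ hφ => h _ (Or.inr hφ)⟩

lemma my_mdisj_iff {lam : ℕ} {H T : ℕ → Set α} {τ : ℕ → ℕ} {k : ℕ} (l : List (MForm α)) :
    MSat lam H T τ k (mdisj l) ↔ ∃ φ ∈ l, MSat lam H T τ k φ := by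
  induction l with
  | nil => simp [mdisj, MSat]
  | cons a l ih =>
    show MSat lam H T τ k (.or a (mdisj l)) ↔ _
    simp only [MSat, ih, List.mem_cons]
    constructor
    · rintro (h | ⟨φ, hφ, h⟩)
      · exact ⟨a, Or.inl rfl, h⟩
      · exact ⟨φ, Or.inr hφ, h⟩
    · rintro ⟨φ, (rfl | hφ), h⟩
      · exact Or.inl h
      · exact Or.inr ⟨φ, hφ, h⟩

lemma my_constraint_down {H T : Set β} (hsub : H ⊆ T) {φ : HTForm β}
    (h : HTSat T T (.imp φ .bot)) : HTSat H T (.imp φ .bot) :=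
  ⟨fun hb => h.1 (my_htpersist hsub φ hb), h.1⟩

end MyHelpers
section MyCorr
variable {α : Type}

/-- Correspondence between a set of translated atoms and a trace. -/
def MyCorr (lam : ℕ) (S : Set (TAtom α)) (f : ℕ → Set α) : Prop :=
  ∀ (a : α) (k : ℕ), k < lam → (Sum.inl (a, k) ∈ S ↔ a ∈ f k)

variable {lam : ℕ} {Hs Ts : Set (TAtom α)} {Hf Ff : ℕ → Set α} {τ : ℕ → ℕ}

lemma my_trB_iff (CH : MyCorr lam Hs Hf) {k : ℕ} (hk : k < lam) (b : BAtom α) :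
    HTSat Hs Ts (trB Sum.inl lam k b) ↔ MSat lam Hf Ff τ k (bToM b) := by
  cases b with
  | atom a => exact CH a k hk
  | initB =>
    by_cases h : k = 0 <;>
      simp [trB, bToM, MSat, h, hTop, hneg, HTSat]
  | finB =>
    by_cases h : k = lam - 1 <;>
      simp [trB, bToM, MSat, h, hTop, hneg, HTSat, mneg, mTop, inI] <;> omega

lemma my_trNegB_iff (CH : MyCorr lam Hs Hf) (CT : MyCorr lam Ts Ff) {k : ℕ} (hk : k < lam)
    (b : BAtom α) :
    HTSat Hs Ts (hneg (trB Sum.inl lam k b)) ↔ MSat lam Hf Ff τ k (mneg (bToM b)) := by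
  have h1 := my_trB_iff (Ts := Ts) (Ff := Ff) (τ := τ) CH hk b
  have h2 := my_trB_iff (Hs := Ts) (Ts := Ts) (Hf := Ff) (Ff := Ff) (τ := τ) CT hk b
  show (_ → _) ∧ (_ → _) ↔ (_ → _) ∧ (_ → _)
  rw [h1, h2]
  exact Iff.rfl

lemma my_trBody_iff (CH : MyCorr lam Hs Hf) (CT : MyCorr lam Ts Ff) {k : ℕ} (hk : k < lam)
    (r : MRule α) :
    HTSat Hs Ts (trBody Sum.inl lam k r) ↔ MSat lam Hf Ff τ k r.mbody := by
  have core : ∀ bp bn : List (BAtom α),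
      (HTSat Hs Ts (.and (hconj (bp.map (trB Sum.inl lam k)))
          (hconj (bn.map (fun b => hneg (trB Sum.inl lam k b))))) ↔
       MSat lam Hf Ff τ k (.and (mconj (bp.map bToM))
          (mconj (bn.map (fun b => mneg (bToM b)))))) := by
    intro bp bn
    show HTSat Hs Ts _ ∧ HTSat Hs Ts _ ↔ MSat lam Hf Ff τ k _ ∧ MSat lam Hf Ff τ k _
    apply and_congr
    · rw [my_hconj_iff, my_mconj_iff]
      constructor
      · intro h b hb
        rcases List.mem_map.1 hb with ⟨b', hb', rfl⟩
        exact (my_trB_iff (Ts := Ts) (Ff := Ff) (τ := τ) CH hk b').1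
          (h _ (List.mem_map_of_mem hb'))
      · intro h b hb
        rcases List.mem_map.1 hb with ⟨b', hb', rfl⟩
        exact (my_trB_iff (Ts := Ts) (Ff := Ff) (τ := τ) CH hk b').2
          (h _ (List.mem_map_of_mem hb'))
    · rw [my_hconj_iff, my_mconj_iff]
      constructor
      · intro h b hb
        rcases List.mem_map.1 hb with ⟨b', hb', rfl⟩
        exact (my_trNegB_iff (τ := τ) CH CT hk b').1 (h _ (List.mem_map_of_mem hb'))
      · intro h b hb
        rcases List.mem_map.1 hb with ⟨b', hb', rfl⟩
        exact (my_trNegB_iff (τ := τ) CH CT hk b').2 (h _ (List.mem_map_of_mem hb'))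
  cases r with
  | std hp hn bp bn => exact core bp bn
  | nxt m n a bp bn => exact core bp bn

lemma my_headStd_iff (CH : MyCorr lam Hs Hf) (CT : MyCorr lam Ts Ff) {k : ℕ} (hk : k < lam)
    (hp hn : List α) :
    HTSat Hs Ts (hdisj (hp.map (fun a => HTForm.atom (Sum.inl (a, k))) ++
        hn.map (fun a => hneg (HTForm.atom (Sum.inl (a, k)))))) ↔
    MSat lam Hf Ff τ k (mdisj (hp.map MForm.atom ++ hn.map (fun a => mneg (MForm.atom a)))) := by
  rw [my_hdisj_iff, my_mdisj_iff]
  constructor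
  · rintro ⟨φ, hmem, hsat⟩
    rcases List.mem_append.1 hmem with h | h
    · obtain ⟨a, ha, rfl⟩ := List.mem_map.1 h
      exact ⟨.atom a, List.mem_append.2 (Or.inl (List.mem_map_of_mem ha)),
        (CH a k hk).1 hsat⟩
    · obtain ⟨a, ha, rfl⟩ := List.mem_map.1 h
      refine ⟨mneg (.atom a), List.mem_append.2 (Or.inr (List.mem_map_of_mem ha)), ?_⟩
      exact ⟨fun hc => hsat.1 ((CH a k hk).2 hc), fun hc => hsat.2 ((CT a k hk).2 hc)⟩
  · rintro ⟨φ, hmem, hsat⟩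
    rcases List.mem_append.1 hmem with h | h
    · obtain ⟨a, ha, rfl⟩ := List.mem_map.1 h
      exact ⟨.atom (Sum.inl (a, k)), List.mem_append.2 (Or.inl (List.mem_map_of_mem ha)),
        (CH a k hk).2 hsat⟩
    · obtain ⟨a, ha, rfl⟩ := List.mem_map.1 h
      refine ⟨hneg (.atom (Sum.inl (a, k))),
        List.mem_append.2 (Or.inr (List.mem_map_of_mem ha)), ?_⟩
      exact ⟨fun hc => hsat.1 ((CH a k hk).1 hc), fun hc => hsat.2 ((CT a k hk).1 hc)⟩

lemma my_trRuleStd_iff (CH : MyCorr lam Hs Hf) (CT : MyCorr lam Ts Ff) {k : ℕ} (hk : k < lam)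
    (hp hn : List α) (bp bn : List (BAtom α)) :
    HTSat Hs Ts (trRule Sum.inl lam k (.std hp hn bp bn)) ↔
    MSat lam Hf Ff τ k (MRule.std hp hn bp bn).toMForm := by
  show (_ → _) ∧ (_ → _) ↔ (_ → _) ∧ (_ → _)
  exact and_congr
    (imp_congr (my_trBody_iff (τ := τ) CH CT hk _) (my_headStd_iff (τ := τ) CH CT hk hp hn))
    (imp_congr (my_trBody_iff (τ := τ) CT CT hk _) (my_headStd_iff (τ := τ) CT CT hk hp hn))

lemma my_trRuleNxt_iff (CH : MyCorr lam Hs Hf) (CT : MyCorr lam Ts Ff) {k : ℕ} (hk : k < lam)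
    (m : ℕ) (n : Option ℕ) (a : α) (bp bn : List (BAtom α)) :
    HTSat Hs Ts (trRule Sum.inl lam k (.nxt m n a bp bn)) ↔
    ((MSat lam Hf Ff τ k (MRule.nxt m n a bp bn).mbody → (k + 1 < lam ∧ a ∈ Hf (k + 1))) ∧
     (MSat lam Ff Ff τ k (MRule.nxt m n a bp bn).mbody → (k + 1 < lam ∧ a ∈ Ff (k + 1)))) := by
  show HTSat Hs Ts (.imp _ (if k = lam - 1 then .bot else .atom (Sum.inl (a, k + 1)))) ↔ _
  by_cases h : k = lam - 1
  · rw [if_pos h]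
    have hk1 : ¬ (k + 1 < lam) := by omega
    show (_ → False) ∧ (_ → False) ↔ _
    rw [my_trBody_iff (τ := τ) CH CT hk, my_trBody_iff (τ := τ) CT CT hk]
    simp [hk1]
  · rw [if_neg h]
    have hk1 : k + 1 < lam := by omega
    show (_ → _) ∧ (_ → _) ↔ _
    rw [my_trBody_iff (τ := τ) CH CT hk, my_trBody_iff (τ := τ) CT CT hk]
    constructor
    · rintro ⟨h1, h2⟩
      exact ⟨fun hb => ⟨hk1, (CH a (k + 1) hk1).1 (h1 hb)⟩,
             fun hb => ⟨hk1, (CT a (k + 1) hk1).1 (h2 hb)⟩⟩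
    · rintro ⟨h1, h2⟩
      exact ⟨fun hb => (CH a (k + 1) hk1).2 (h1 hb).2,
             fun hb => (CT a (k + 1) hk1).2 (h2 hb).2⟩

end MyCorr
open Classical in
/-- The canonical timing chain extracted from a set of translated atoms. -/
noncomputable def myTau {α : Type} (Tstar : Set (TAtom α)) (ν : ℕ) : ℕ → ℕ
  | 0 => 0
  | k + 1 =>
      if h : ∃ d', Sum.inr (k + 1, d') ∈ Tstar ∧ myTau Tstar ν k < d' ∧ d' ≤ ν then
        h.choose
      else 0
/-- Theorem 2 (Correctness of the Boolean translation). -/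
theorem boolean_translation_correct {α : Type} (lam ν : ℕ) (P : Set (MRule α))
    (Tstar : Set (TAtom α))
    (he : EqModel Tstar (PiT Sum.inl lam P ∪ DeltaB Sum.inr lam ν ∪ PsiB lam ν P)) :
    ∃ τ : ℕ → ℕ, TimingFn lam τ ∧
      (∀ k, k < lam → ∀ d, (Sum.inr (k, d) ∈ Tstar ↔ τ k = d)) ∧
      MetricEq lam (fun k => {a | Sum.inl (a, k) ∈ Tstar}) τ P := by
  classical
  obtain ⟨htot, hmin⟩ := he
  by_cases hlam0 : lam = 0
  · subst hlam0
    exact ⟨fun _ => 0, ⟨rfl, fun k hk => absurd hk (by omega)⟩,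
      fun k hk => absurd hk (by omega),
      fun r hr k hk => absurd hk (by omega),
      fun H _ _ k hk => absurd hk (by omega)⟩
  have hlam : 0 < lam := Nat.pos_of_ne_zero hlam0
  set τ : ℕ → ℕ := myTau Tstar ν with hτdef
  -- the "there"-trace
  set T : ℕ → Set α := fun k => {a | Sum.inl (a, k) ∈ Tstar} with hTdef
  have CorrT : MyCorr lam Tstar T := fun a k _ => Iff.rfl
  -- Δ-satisfaction at the total level
  have hΔ : ∀ φ ∈ DeltaB Sum.inr lam ν, HTSat Tstar Tstar φ := by
    intro φ hφ
    exact htot φ (Or.inl (Or.inr hφ))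
  have hτ0 : τ 0 = 0 := rfl
  -- chain step
  have hstep : ∀ k, k + 1 < lam → Sum.inr (k, τ k) ∈ Tstar → τ k ≤ ν →
      ∃ d', Sum.inr (k + 1, d') ∈ Tstar ∧ τ k < d' ∧ d' ≤ ν := by
    intro k hk1 hm hle
    have hrule := hΔ _ (Or.inr ⟨k, τ k, hk1, hle, rfl⟩)
    have hd := hrule.1 hm
    rw [my_hdisj_iff] at hd
    obtain ⟨ψ, hmemψ, hsat⟩ := hd
    simp only [List.mem_map, List.mem_filter, List.mem_range, decide_eq_true_eq] at hmemψ
    obtain ⟨d', ⟨hdr, hdlt⟩, rfl⟩ := hmemψ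
    exact ⟨d', hsat, hdlt, by omega⟩
  have hτsucc : ∀ k, (∃ d', Sum.inr (k + 1, d') ∈ Tstar ∧ τ k < d' ∧ d' ≤ ν) →
      Sum.inr (k + 1, τ (k + 1)) ∈ Tstar ∧ τ k < τ (k + 1) ∧ τ (k + 1) ≤ ν := by
    intro k hex
    have heq : τ (k + 1) = hex.choose := by
      show myTau Tstar ν (k + 1) = _
      rw [myTau]
      exact dif_pos hex
    rw [heq]
    exact hex.choose_spec
  have hchain : ∀ k, k < lam → Sum.inr (k, τ k) ∈ Tstar ∧ τ k ≤ ν := by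
    intro k
    induction k with
    | zero => exact fun _ => ⟨hΔ _ (Or.inl rfl), Nat.zero_le _⟩
    | succ k ih =>
      intro hk1
      obtain ⟨hm, hle⟩ := ih (by omega)
      obtain ⟨h1, _, h3⟩ := hτsucc k (hstep k hk1 hm hle)
      exact ⟨h1, h3⟩
  have hinc : ∀ k, k + 1 < lam → τ k < τ (k + 1) := by
    intro k hk1
    obtain ⟨hm, hle⟩ := hchain k (by omega)
    exact (hτsucc k (hstep k hk1 hm hle)).2.1
  -- generic: candidate here-sets satisfy Δ and Ψ
  have modelDP : ∀ H' : Set (TAtom α), H' ⊆ Tstar →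
      (∀ k d, Sum.inr (k, d) ∈ H' ↔ (k < lam ∧ τ k = d)) →
      (∀ φ ∈ PiT Sum.inl lam P, HTSat H' Tstar φ) →
      HTModel H' Tstar (PiT Sum.inl lam P ∪ DeltaB Sum.inr lam ν ∪ PsiB lam ν P) := by
    intro H' hsub htim hPi φ hφ
    rcases hφ with (hφ | hφ) | hφ
    · exact hPi φ hφ
    · rcases hφ with h0 | ⟨k, d, hk1, hd, rfl⟩
      · rw [h0]
        show Sum.inr (0, 0) ∈ H'
        exact (htim 0 0).2 ⟨hlam, hτ0⟩
      · refine ⟨?_, (hΔ _ (Or.inr ⟨k, d, hk1, hd, rfl⟩)).2⟩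
        intro hmem
        obtain ⟨hk, hkd⟩ := (htim k d).1 hmem
        rw [my_hdisj_iff]
        refine ⟨.atom (Sum.inr (k + 1, τ (k + 1))), ?_, ?_⟩
        · have ha1 := (hchain (k + 1) hk1).2
          have ha2 := hinc k hk1
          simp only [List.mem_map, List.mem_filter, List.mem_range, decide_eq_true_eq]
          exact ⟨τ (k + 1), ⟨by omega, by omega⟩, rfl⟩
        · show Sum.inr (k + 1, τ (k + 1)) ∈ H'
          exact (htim (k + 1) (τ (k + 1))).2 ⟨hk1, rfl⟩
    · obtain ⟨m, n, a, bp, bn, hr, k, d, d', h1, h2, h3, hEq, h5⟩ := hφ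
      subst hEq
      exact my_constraint_down hsub
        (htot _ (Or.inr ⟨m, n, a, bp, bn, hr, k, d, d', h1, h2, h3, rfl, h5⟩))
  -- step B : timing atoms of Tstar are exactly the chain
  set H0 : Set (TAtom α) :=
    {x ∈ Tstar | ∀ k d, x = Sum.inr (k, d) → (k < lam ∧ τ k = d)} with hH0def
  have CorrH0 : MyCorr lam H0 T := by
    intro a k hk
    constructor
    · exact fun h => h.1
    · intro h
      exact ⟨h, fun k' d' hx => by cases hx⟩
  have htimH0 : ∀ k d, Sum.inr (k, d) ∈ H0 ↔ (k < lam ∧ τ k = d) := by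
    intro k d
    constructor
    · intro h
      exact h.2 k d rfl
    · rintro ⟨hk, rfl⟩
      refine ⟨(hchain k hk).1, ?_⟩
      rintro k' d' h
      simp only [Sum.inr.injEq, Prod.mk.injEq] at h
      obtain ⟨rfl, rfl⟩ := h
      exact ⟨hk, rfl⟩

  have hPiH0 : ∀ φ ∈ PiT Sum.inl lam P, HTSat H0 Tstar φ := by
    intro φ hφ
    obtain ⟨r, hr, k, hk, rfl⟩ := hφ
    have base := htot _ (Or.inl (Or.inl ⟨r, hr, k, hk, rfl⟩))
    cases r with
    | std hp hn bp bn =>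
      exact (my_trRuleStd_iff (τ := τ) CorrH0 CorrT hk hp hn bp bn).2
        ((my_trRuleStd_iff (τ := τ) CorrT CorrT hk hp hn bp bn).1 base)
    | nxt m n a bp bn =>
      exact (my_trRuleNxt_iff (τ := τ) CorrH0 CorrT hk m n a bp bn).2
        ((my_trRuleNxt_iff (τ := τ) CorrT CorrT hk m n a bp bn).1 base)
  have hH0sub : H0 ⊆ Tstar := fun x hx => hx.1
  have hH0eq : H0 = Tstar := hmin H0 hH0sub (modelDP H0 hH0sub htimH0 hPiH0)
  have htiming : ∀ k, k < lam → ∀ d, (Sum.inr (k, d) ∈ Tstar ↔ τ k = d) := by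
    intro k hk d
    constructor
    · intro h
      rw [← hH0eq] at h
      exact ((htimH0 k d).1 h).2
    · rintro rfl
      exact (hchain k hk).1
  -- Ψ gives the interval constraint
  have hMsatPsi : ∀ (m : ℕ) (n : Option ℕ) (a : α) (bp bn : List (BAtom α)),
      MRule.nxt m n a bp bn ∈ P →
      ∀ k, k + 1 < lam → MSat lam T T τ k (MRule.nxt m n a bp bn).mbody →
      inI m n (τ (k + 1) - τ k) := by
    intro m n a bp bn hr k hk1 hbody
    by_contra hni
    have hviol : τ (k + 1) - τ k < m ∨ ∃ n', n = some n' ∧ n' ≤ τ (k + 1) - τ k := by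
      rw [inI] at hni
      push_neg at hni
      by_cases hm : m ≤ τ (k + 1) - τ k
      · obtain ⟨n', hn', hle⟩ := hni hm
        exact Or.inr ⟨n', hn', by omega⟩
      · exact Or.inl (by omega)
    have hψ := htot _ (Or.inr ⟨m, n, a, bp, bn, hr, k, τ k, τ (k + 1), hk1,
      hinc k hk1, (hchain (k + 1) hk1).2, rfl, hviol⟩)
    exact hψ.1 ⟨(my_trBody_iff (τ := τ) CorrT CorrT (show k < lam by omega)
        (MRule.nxt m n a bp bn)).2 hbody,
      (hchain k (by omega)).1, (hchain (k + 1) hk1).1⟩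
  -- step C : the total trace is an MHT-model
  have hC : MHTModelP lam T T τ P := by
    intro r hr k hk
    have base := htot _ (Or.inl (Or.inl ⟨r, hr, k, hk, rfl⟩))
    cases r with
    | std hp hn bp bn =>
      exact (my_trRuleStd_iff (τ := τ) CorrT CorrT hk hp hn bp bn).1 base
    | nxt m n a bp bn =>
      have hb := (my_trRuleNxt_iff (τ := τ) CorrT CorrT hk m n a bp bn).1 base
      have key : MSat lam T T τ k (MRule.nxt m n a bp bn).mbody →
          MSat lam T T τ k (MForm.next m n (.atom a)) := by
        intro hbody
        obtain ⟨hk1, hmem⟩ := hb.1 hbody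
        exact ⟨hk1, hmem, hMsatPsi m n a bp bn hr k hk1 hbody⟩
      exact ⟨key, key⟩
  refine ⟨τ, ⟨hτ0, hinc⟩, htiming, hC, ?_⟩
  -- step D : minimality
  intro H hHsub hHmod k hk
  set Hst : Set (TAtom α) :=
    {x | (∃ a j, j < lam ∧ a ∈ H j ∧ x = Sum.inl (a, j)) ∨
         (∃ j, j < lam ∧ x = Sum.inr (j, τ j))} with hHstdef
  have hsubst : Hst ⊆ Tstar := by
    rintro x (⟨a, j, hj, ha, rfl⟩ | ⟨j, hj, rfl⟩)
    · exact hHsub j ha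
    · exact (hchain j hj).1
  have CorrHst : MyCorr lam Hst H := by
    intro a j hj
    constructor
    · rintro (⟨a', j', hj', ha', h⟩ | ⟨j', hj', h⟩)
      · simp only [Sum.inl.injEq, Prod.mk.injEq] at h
        obtain ⟨rfl, rfl⟩ := h
        exact ha'
      · simp at h
    · intro ha
      exact Or.inl ⟨a, j, hj, ha, rfl⟩
  have htimHst : ∀ j d, Sum.inr (j, d) ∈ Hst ↔ (j < lam ∧ τ j = d) := by
    intro j d
    constructor
    · rintro (⟨a', j', hj', ha', h⟩ | ⟨j', hj', h⟩)
      · simp at h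
      · simp only [Sum.inr.injEq, Prod.mk.injEq] at h
        obtain ⟨rfl, rfl⟩ := h
        exact ⟨hj', rfl⟩
    · rintro ⟨hj, rfl⟩
      exact Or.inr ⟨j, hj, rfl⟩
  have hPiHst : ∀ φ ∈ PiT Sum.inl lam P, HTSat Hst Tstar φ := by
    intro φ hφ
    obtain ⟨r, hr, j, hj, rfl⟩ := hφ
    have hM := hHmod r hr j hj
    cases r with
    | std hp hn bp bn =>
      exact (my_trRuleStd_iff (τ := τ) CorrHst CorrT hj hp hn bp bn).2 hM
    | nxt m n a bp bn =>
      refine (my_trRuleNxt_iff (τ := τ) CorrHst CorrT hj m n a bp bn).2 ⟨?_, ?_⟩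
      · intro hb
        obtain ⟨h1, h2, _⟩ := hM.1 hb
        exact ⟨h1, h2⟩
      · intro hb
        obtain ⟨h1, h2, _⟩ := hM.2 hb
        exact ⟨h1, h2⟩
  have hHsteq : Hst = Tstar := hmin Hst hsubst (modelDP Hst hsubst htimHst hPiHst)
  apply Set.Subset.antisymm (hHsub k)
  intro a ha
  have ha' : Sum.inl (a, k) ∈ Tstar := ha
  rw [← hHsteq] at ha'
  exact (CorrHst a k hk).1 ha'
end
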